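/- There exists a constant C > 0 such that for every x with ‖x‖ ≥ r₀ one has |φ(x) − (m/2 + r₀^{n−2}) · ‖x‖^{2−n}| ≤ C · ‖x‖^{−2(n−2)}. In particular, the coefficient of ‖x‖^{2−n} in the expansion of φ at infinity, which by definition of the expansion (B.1) is the boundary capacity C_{g_m}(Σ_{r₀}, M^n_m(r₀)), equals m/2 + r₀^{n−2}. -/
import Mathlib


/-- The boundary capacity potential of the coordinate sphere `Σ_{r₀}` in the exterior region
of the Riemannian Schwarzschild manifold of mass `m`, in Euclidean coordinates:
`φ(x) = (1 + s₀)(1 + m/(2‖x‖^{n−2}))⁻¹ (r₀/‖x‖)^{n−2}` with `s₀ = m/(2r₀^{n−2})`. -/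
noncomputable def schwarzschildPotential (n : ℕ) (r₀ m : ℝ)
    (x : EuclideanSpace ℝ (Fin n)) : ℝ :=
  (1 + m / (2 * r₀ ^ ((n : ℝ) - 2))) * (1 + m / (2 * ‖x‖ ^ ((n : ℝ) - 2)))⁻¹ *
    (r₀ / ‖x‖) ^ ((n : ℝ) - 2)

/-- There exists `C > 0` such that for all `x` with `‖x‖ ≥ r₀`,
`|φ(x) − (m/2 + r₀^{n−2})‖x‖^{2−n}| ≤ C ‖x‖^{−2(n−2)}`; hence the coefficient of `‖x‖^{2−n}`
in the expansion of `φ` at infinity, i.e. the boundary capacity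
`C_{g_m}(Σ_{r₀}, M^n_m(r₀))`, equals `m/2 + r₀^{n−2}`. -/
theorem stmt3 (n : ℕ) (hn : 3 ≤ n) (r₀ m : ℝ) (hr₀ : 0 < r₀)
    (hs₀ : 0 < 1 + m / (2 * r₀ ^ ((n : ℝ) - 2))) :
    ∃ C > (0 : ℝ), ∀ x : EuclideanSpace ℝ (Fin n), r₀ ≤ ‖x‖ →
      |schwarzschildPotential n r₀ m x - (m / 2 + r₀ ^ ((n : ℝ) - 2)) * ‖x‖ ^ ((2 : ℝ) - n)| ≤
        C * ‖x‖ ^ (-(2 * ((n : ℝ) - 2))) := by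
  have hepos : (0:ℝ) < (n : ℝ) - 2 := by
    have : (3:ℝ) ≤ (n : ℝ) := by exact_mod_cast hn
    linarith
  set e : ℝ := (n : ℝ) - 2 with he
  set k : ℝ := r₀ ^ e with hk
  have hkpos : 0 < k := Real.rpow_pos_of_pos hr₀ e
  set δ : ℝ := min 1 (1 + m / (2 * k)) with hδ
  have hδpos : 0 < δ := lt_min one_pos hs₀
  refine ⟨|m / 2 + k| * |m| / 2 / δ + 1, by positivity, ?_⟩
  intro x hx
  have hr : 0 < ‖x‖ := lt_of_lt_of_le hr₀ hx
  set r : ℝ := ‖x‖ with hrdef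
  set a : ℝ := r ^ e with ha
  have hapos : 0 < a := Real.rpow_pos_of_pos hr e
  have hka : k ≤ a := Real.rpow_le_rpow hr₀.le hx hepos.le
  have hmq : m < 0 → m / (2 * k) ≤ m / (2 * a) := by
    intro hm
    rw [div_le_div_iff₀ (by positivity) (by positivity)]
    nlinarith
  have hDa : 0 < 1 + m / (2 * a) := by
    rcases le_or_gt 0 m with hm | hm
    · have : (0:ℝ) ≤ m / (2 * a) := by positivity
      linarith
    · have := hmq hm; linarith
  have hδa : δ ≤ 1 + m / (2 * a) := by
    rcases le_or_gt 0 m with hm | hm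
    · have h1 : (0:ℝ) ≤ m / (2 * a) := by positivity
      have := min_le_left (1:ℝ) (1 + m / (2 * k)); linarith
    · have h1 := hmq hm
      have := min_le_right (1:ℝ) (1 + m / (2 * k)); linarith
  -- rewrite the powers
  have h2n : r ^ ((2:ℝ) - n) = a⁻¹ := by
    have : (2:ℝ) - n = -e := by ring
    rw [this, Real.rpow_neg hr.le]
  have h2e : r ^ (-(2 * e)) = (a ^ 2)⁻¹ := by
    rw [Real.rpow_neg hr.le]
    congr 1
    rw [mul_comm, Real.rpow_mul hr.le, ha, Real.rpow_two]
  have hdiv : (r₀ / r) ^ e = k / a := Real.div_rpow hr₀.le hr.le e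
  have hφ : schwarzschildPotential n r₀ m x =
      (1 + m / (2 * k)) * (1 + m / (2 * a))⁻¹ * (k / a) := by
    rw [schwarzschildPotential, ← he, ← hrdef, ← hk, ← ha, hdiv]
  rw [hφ, h2n, h2e]
  have hD : 1 + m / (2 * a) = (2 * a + m) / (2 * a) := by field_simp
  have h2am : 0 < 2 * a + m := by
    have h := hDa
    rw [hD] at h
    rcases div_pos_iff.mp h with ⟨h1, _⟩ | ⟨_, h2⟩
    · exact h1
    · linarith
  have key : (1 + m / (2 * k)) * (1 + m / (2 * a))⁻¹ * (k / a) - (m / 2 + k) * a⁻¹ =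
      -((m / 2 + k) * m) / (2 * a ^ 2 * (1 + m / (2 * a))) := by
    rw [hD]
    field_simp
    ring
  rw [key, abs_div, abs_neg, abs_mul]
  have habs : |2 * a ^ 2 * (1 + m / (2 * a))| = 2 * a ^ 2 * (1 + m / (2 * a)) :=
    abs_of_pos (by positivity)
  rw [habs]
  have hrw : |m / 2 + k| * |m| / (2 * a ^ 2 * (1 + m / (2 * a))) =
      |m / 2 + k| * |m| / 2 * (1 + m / (2 * a))⁻¹ * (a ^ 2)⁻¹ := by
    rw [div_eq_mul_inv, mul_inv, mul_inv, div_eq_mul_inv]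
    ring
  rw [hrw]
  have hinv : (1 + m / (2 * a))⁻¹ ≤ δ⁻¹ := by
    exact inv_anti₀ hδpos hδa
  have h1 : |m / 2 + k| * |m| / 2 * (1 + m / (2 * a))⁻¹ ≤ |m / 2 + k| * |m| / 2 * δ⁻¹ := by
    apply mul_le_mul_of_nonneg_left hinv (by positivity)
  have h2 : |m / 2 + k| * |m| / 2 * δ⁻¹ ≤ |m / 2 + k| * |m| / 2 / δ + 1 := by
    rw [div_eq_mul_inv (|m / 2 + k| * |m| / 2) δ]; linarith
  have h3 : (0:ℝ) < (a ^ 2)⁻¹ := by positivity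
  calc |m / 2 + k| * |m| / 2 * (1 + m / (2 * a))⁻¹ * (a ^ 2)⁻¹
      ≤ (|m / 2 + k| * |m| / 2 / δ + 1) * (a ^ 2)⁻¹ := by
        apply mul_le_mul_of_nonneg_right (le_trans h1 h2) h3.le
    _ = _ := rfl
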